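/- There exists a constant C > 0, depending only on f, R and b−a, such that for all continuously differentiable functions u, v : [a,b] → ℝ with ‖u‖_{L∞} ≤ R, ‖v‖_{L∞} ≤ R and ∫ₐᵇ |v'(x)|² dx ≤ R², one has ‖f∘u − f∘v‖_{H¹} ≤ C·‖u − v‖_{H¹}. -/

import Mathlib

open MeasureTheory intervalIntegral

open Set in
lemma cont_intInt {a b : ℝ} (hab : a ≤ b) {g : ℝ → ℝ} (hg : ContinuousOn g (Set.Icc a b)) :
    IntervalIntegrable g volume a b := by
  apply ContinuousOn.intervalIntegrable
  rwa [Set.uIcc_of_le hab]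

lemma sobolev_aux {a b : ℝ} (hab : a < b) {w : ℝ → ℝ}
    (hw : ContDiffOn ℝ 1 w (Set.Icc a b)) {x : ℝ} (hx : x ∈ Set.Icc a b) :
    (w x)^2 ≤ (1/(b-a) + 1) * ∫ t in a..b, ((w t)^2 + (derivWithin w (Set.Icc a b) t)^2) := by
  set w' := derivWithin w (Set.Icc a b) with hw'
  have hwc : ContinuousOn w (Set.Icc a b) := hw.continuousOn
  have hw'c : ContinuousOn w' (Set.Icc a b) :=
    hw.continuousOn_derivWithin (uniqueDiffOn_Icc hab) le_rfl
  have hFc : ContinuousOn (fun t => (w t)^2 + (w' t)^2) (Set.Icc a b) :=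
    (hwc.pow 2).add (hw'c.pow 2)
  have hFint : IntervalIntegrable (fun t => (w t)^2 + (w' t)^2) volume a b :=
    cont_intInt hab.le hFc
  have hSnn : 0 ≤ ∫ t in a..b, ((w t)^2 + (w' t)^2) :=
    intervalIntegral.integral_nonneg hab.le (fun t _ => by positivity)
  have hw2S : (∫ t in a..b, (w t)^2) ≤ ∫ t in a..b, ((w t)^2 + (w' t)^2) :=
    intervalIntegral.integral_mono_on hab.le (cont_intInt hab.le (hwc.pow 2)) hFint
      (fun t _ => le_add_of_nonneg_right (sq_nonneg _))
  -- minimum point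
  obtain ⟨y, hy, hymin⟩ := isCompact_Icc.exists_isMinOn (Set.nonempty_Icc.mpr hab.le)
    (hwc.pow 2)
  have hmin : (w y)^2 ≤ (1/(b-a)) * ∫ t in a..b, (w t)^2 := by
    have h1 : (b - a) * (w y)^2 ≤ ∫ t in a..b, (w t)^2 := by
      have := intervalIntegral.integral_mono_on (μ := volume) hab.le
        (_root_.intervalIntegrable_const (c := (w y)^2)) (cont_intInt hab.le (hwc.pow 2))
        (fun t ht => hymin ht)
      simpa [smul_eq_mul] using this
    rw [div_mul_eq_mul_div, le_div_iff₀ (by linarith)]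
    linarith
  -- FTC for w^2 between y and x
  have hderiv : ∀ t ∈ Set.Ioo a b, HasDerivAt (fun s => (w s)^2) (2 * w t * w' t) t := by
    intro t ht
    have hda : HasDerivAt w (w' t) t :=
      ((hw.differentiableOn one_ne_zero t (Set.Ioo_subset_Icc_self ht)).hasDerivWithinAt).hasDerivAt
        (Icc_mem_nhds ht.1 ht.2)
    have := hda.fun_pow 2
    simpa [mul_comm, mul_assoc, pow_one] using this
  have hFTC : (w x)^2 - (w y)^2 = ∫ t in y..x, (2 * w t * w' t) := by
    have hsub : Set.uIcc y x ⊆ Set.Icc a b := Set.uIcc_subset_Icc hy hx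
    have : ∫ t in y..x, (2 * w t * w' t) = (w x)^2 - (w y)^2 := by
      apply intervalIntegral.integral_eq_sub_of_hasDeriv_right
      · exact (hwc.pow 2).mono hsub
      · intro t ht
        have ht' : t ∈ Set.Ioo a b := by
          constructor
          · exact lt_of_le_of_lt (le_min hy.1 hx.1) ht.1
          · exact lt_of_lt_of_le ht.2 (max_le hy.2 hx.2)
        exact (hderiv t ht').hasDerivWithinAt
      · apply ContinuousOn.intervalIntegrable
        exact ((continuousOn_const.mul (hwc.mono hsub)).mul (hw'c.mono hsub)).congr
          (fun t ht => rfl)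
    linarith [this]
  have hbound : (w x)^2 - (w y)^2 ≤ ∫ t in a..b, ((w t)^2 + (w' t)^2) := by
    rw [hFTC]
    rcases le_total y x with hyx | hxy
    · calc ∫ t in y..x, (2 * w t * w' t)
          ≤ ∫ t in y..x, ((w t)^2 + (w' t)^2) := by
            apply intervalIntegral.integral_mono_on hyx
            · apply cont_intInt hyx
              exact (continuousOn_const.mul (hwc.mono (Set.Icc_subset_Icc hy.1 hx.2))).mul
                (hw'c.mono (Set.Icc_subset_Icc hy.1 hx.2))
            · exact cont_intInt hyx (hFc.mono (Set.Icc_subset_Icc hy.1 hx.2))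
            · exact fun t _ => two_mul_le_add_sq (w t) (w' t)
        _ ≤ ∫ t in a..b, ((w t)^2 + (w' t)^2) := by
            apply intervalIntegral.integral_mono_interval hy.1 hyx hx.2
            · filter_upwards with t using by positivity
            · exact hFint
    · rw [intervalIntegral.integral_symm, ← intervalIntegral.integral_neg]
      calc ∫ t in x..y, -(2 * w t * w' t)
          ≤ ∫ t in x..y, ((w t)^2 + (w' t)^2) := by
            apply intervalIntegral.integral_mono_on hxy
            · apply cont_intInt hxy
              exact (((continuousOn_const.mul (hwc.mono (Set.Icc_subset_Icc hx.1 hy.2))).mul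
                (hw'c.mono (Set.Icc_subset_Icc hx.1 hy.2)))).neg
            · exact cont_intInt hxy (hFc.mono (Set.Icc_subset_Icc hx.1 hy.2))
            · intro t _
              nlinarith [sq_nonneg (w t + w' t)]
        _ ≤ ∫ t in a..b, ((w t)^2 + (w' t)^2) := by
            apply intervalIntegral.integral_mono_interval hx.1 hxy hy.2
            · filter_upwards with t using by positivity
            · exact hFint
  have h1L : 0 < 1/(b-a) := by
    have h : (0:ℝ) < b - a := by linarith
    positivity
  calc (w x)^2 = (w y)^2 + ((w x)^2 - (w y)^2) := by ring
    _ ≤ (1/(b-a)) * (∫ t in a..b, (w t)^2) + ∫ t in a..b, ((w t)^2 + (w' t)^2) := by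
        linarith
    _ ≤ (1/(b-a)) * (∫ t in a..b, ((w t)^2 + (w' t)^2))
        + ∫ t in a..b, ((w t)^2 + (w' t)^2) := by nlinarith
    _ = (1/(b-a) + 1) * ∫ t in a..b, ((w t)^2 + (w' t)^2) := by ring


/-- The `H¹(a,b)` norm of a function `w : [a,b] → ℝ`, computed with the
derivative within `[a,b]`. -/
noncomputable def H1Norm (a b : ℝ) (w : ℝ → ℝ) : ℝ :=
  Real.sqrt (∫ x in a..b, ((w x) ^ 2 + (derivWithin w (Set.Icc a b) x) ^ 2))

set_option maxHeartbeats 1000000 in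
/-- `H¹`-Lipschitz bound for composition with a `C²` nonlinearity:
there is a constant `C > 0` depending only on `f`, `R` and the interval length
`L = b − a` such that for all `C¹` functions `u, v` on `[a,b]` with
`‖u‖_{L∞} ≤ R`, `‖v‖_{L∞} ≤ R` and `∫ₐᵇ |v'|² ≤ R²`, one has
`‖f∘u − f∘v‖_{H¹} ≤ C‖u − v‖_{H¹}`. -/
theorem composition_H1_lipschitz
    (L R : ℝ) (hL : 0 < L) (hR : 0 < R)
    (f : ℝ → ℝ) (hf : ContDiff ℝ 2 f) :
    ∃ C : ℝ, 0 < C ∧ ∀ a b : ℝ, a < b → b - a = L →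
      ∀ u v : ℝ → ℝ,
        ContDiffOn ℝ 1 u (Set.Icc a b) → ContDiffOn ℝ 1 v (Set.Icc a b) →
        (∀ x ∈ Set.Icc a b, |u x| ≤ R) →
        (∀ x ∈ Set.Icc a b, |v x| ≤ R) →
        (∫ x in a..b, (derivWithin v (Set.Icc a b) x) ^ 2) ≤ R ^ 2 →
        H1Norm a b (fun x => f (u x) - f (v x)) ≤ C * H1Norm a b (fun x => u x - v x) := by
  have hf2 : ContDiff ℝ (1+1) f := by exact_mod_cast hf
  have hfd : Differentiable ℝ f := (contDiff_succ_iff_deriv.mp hf2).1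
  have hf1 : ContDiff ℝ 1 (deriv f) := (contDiff_succ_iff_deriv.mp hf2).2.2
  have hcd1 : Continuous (deriv f) := hf1.continuous
  have hf1d : Differentiable ℝ (deriv f) := hf1.differentiable one_ne_zero
  have hcd2 : Continuous (deriv (deriv f)) := hf1.continuous_deriv le_rfl
  obtain ⟨M1, hM1'⟩ := (isCompact_Icc (a := -R) (b := R)).exists_bound_of_continuousOn
    hcd1.continuousOn
  obtain ⟨M2, hM2'⟩ := (isCompact_Icc (a := -R) (b := R)).exists_bound_of_continuousOn
    hcd2.continuousOn
  have hM1 : ∀ z ∈ Set.Icc (-R) R, |deriv f z| ≤ M1 := by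
    intro z hz; simpa [Real.norm_eq_abs] using hM1' z hz
  have hM2 : ∀ z ∈ Set.Icc (-R) R, |deriv (deriv f) z| ≤ M2 := by
    intro z hz; simpa [Real.norm_eq_abs] using hM2' z hz
  have h0mem : (0:ℝ) ∈ Set.Icc (-R) R := ⟨by linarith, by linarith⟩
  have hM1nn : 0 ≤ M1 := (abs_nonneg _).trans (hM1 0 h0mem)
  have hM2nn : 0 ≤ M2 := (abs_nonneg _).trans (hM2 0 h0mem)
  have hlip1 : ∀ p ∈ Set.Icc (-R) R, ∀ q ∈ Set.Icc (-R) R, |f p - f q| ≤ M1 * |p - q| := by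
    intro p hp q hq
    simpa [Real.norm_eq_abs] using
      (convex_Icc (-R) R).norm_image_sub_le_of_norm_deriv_le
        (fun z _ => hfd z) (fun z hz => hM1' z hz) hq hp
  have hlip2 : ∀ p ∈ Set.Icc (-R) R, ∀ q ∈ Set.Icc (-R) R,
      |deriv f p - deriv f q| ≤ M2 * |p - q| := by
    intro p hp q hq
    simpa [Real.norm_eq_abs] using
      (convex_Icc (-R) R).norm_image_sub_le_of_norm_deriv_le
        (fun z _ => hf1d z) (fun z hz => hM2' z hz) hq hp
  have h1L : (0:ℝ) < 1/L := one_div_pos.mpr hL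
  set K : ℝ := 3*M1^2 + 2*M2^2*(1/L+1)*R^2 with hK
  have hKnn : 0 ≤ K := by
    have h : 0 ≤ 2*M2^2*(1/L+1)*R^2 :=
      mul_nonneg (mul_nonneg (by positivity) (by linarith)) (sq_nonneg R)
    rw [hK]
    nlinarith [sq_nonneg M1]
  refine ⟨Real.sqrt (K+1), Real.sqrt_pos.mpr (by linarith), ?_⟩
  intro a b hab hba u v hu hv huR hvR hvd
  have uD : UniqueDiffOn ℝ (Set.Icc a b) := uniqueDiffOn_Icc hab
  have hudiff : DifferentiableOn ℝ u (Set.Icc a b) := hu.differentiableOn one_ne_zero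
  have hvdiff : DifferentiableOn ℝ v (Set.Icc a b) := hv.differentiableOn one_ne_zero
  set u' := derivWithin u (Set.Icc a b) with hu'def
  set v' := derivWithin v (Set.Icc a b) with hv'def
  have hu'c : ContinuousOn u' (Set.Icc a b) := hu.continuousOn_derivWithin uD le_rfl
  have hv'c : ContinuousOn v' (Set.Icc a b) := hv.continuousOn_derivWithin uD le_rfl
  have hwCD : ContDiffOn ℝ 1 (fun x => u x - v x) (Set.Icc a b) := hu.sub hv
  set w' := derivWithin (fun x => u x - v x) (Set.Icc a b) with hw'def
  have hw'c : ContinuousOn w' (Set.Icc a b) := hwCD.continuousOn_derivWithin uD le_rfl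
  have hw'eq : ∀ x ∈ Set.Icc a b, w' x = u' x - v' x := fun x hx =>
    derivWithin_fun_sub (hudiff x hx) (hvdiff x hx)
  have hfuCD : ContDiffOn ℝ 1 (fun x => f (u x) - f (v x)) (Set.Icc a b) :=
    ((hf.of_le one_le_two).comp_contDiffOn hu).sub ((hf.of_le one_le_two).comp_contDiffOn hv)
  set D := derivWithin (fun x => f (u x) - f (v x)) (Set.Icc a b) with hDdef
  have hDc : ContinuousOn D (Set.Icc a b) := hfuCD.continuousOn_derivWithin uD le_rfl
  have hDeq : ∀ x ∈ Set.Icc a b, D x = deriv f (u x) * u' x - deriv f (v x) * v' x := by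
    intro x hx
    have h1 : HasDerivWithinAt (fun y => f (u y)) (deriv f (u x) * u' x) (Set.Icc a b) x :=
      ((hfd (u x)).hasDerivAt).comp_hasDerivWithinAt x (hudiff x hx).hasDerivWithinAt
    have h2 : HasDerivWithinAt (fun y => f (v y)) (deriv f (v x) * v' x) (Set.Icc a b) x :=
      ((hfd (v x)).hasDerivAt).comp_hasDerivWithinAt x (hvdiff x hx).hasDerivWithinAt
    exact (h1.sub h2).derivWithin (uD x hx)
  set S : ℝ := ∫ x in a..b, ((u x - v x)^2 + (w' x)^2) with hSdef
  have hSnn : 0 ≤ S :=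
    intervalIntegral.integral_nonneg hab.le (fun t _ => by positivity)
  have hsob : ∀ x ∈ Set.Icc a b, (u x - v x)^2 ≤ (1/L + 1) * S := by
    intro x hx
    have h := sobolev_aux hab hwCD hx
    rw [hba] at h
    exact h
  -- pointwise bound
  have hNum : ∀ x ∈ Set.Icc a b,
      (f (u x) - f (v x))^2 + (D x)^2 ≤
        M1^2*(u x - v x)^2 + 2*M1^2*(w' x)^2 + 2*M2^2*((1/L+1)*S)*(v' x)^2 := by
    intro x hx
    have hum : u x ∈ Set.Icc (-R) R := Set.mem_Icc.mpr (abs_le.mp (huR x hx))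
    have hvm : v x ∈ Set.Icc (-R) R := Set.mem_Icc.mpr (abs_le.mp (hvR x hx))
    have hA : |f (u x) - f (v x)| ≤ M1 * |u x - v x| := hlip1 _ hum _ hvm
    have hB : |deriv f (u x) - deriv f (v x)| ≤ M2 * |u x - v x| := hlip2 _ hum _ hvm
    have hC1 : |deriv f (u x)| ≤ M1 := hM1 _ hum
    have hAsq : (f (u x) - f (v x))^2 ≤ M1^2 * (u x - v x)^2 := by
      have := pow_le_pow_left₀ (abs_nonneg _) hA 2
      rwa [sq_abs, mul_pow, sq_abs] at this
    have hDform : D x = deriv f (u x) * w' x + (deriv f (u x) - deriv f (v x)) * v' x := by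
      rw [hDeq x hx, hw'eq x hx]; ring
    have hDabs : |D x| ≤ M1 * |w' x| + M2 * |u x - v x| * |v' x| := by
      rw [hDform]
      calc |deriv f (u x) * w' x + (deriv f (u x) - deriv f (v x)) * v' x|
          ≤ |deriv f (u x) * w' x| + |(deriv f (u x) - deriv f (v x)) * v' x| := abs_add_le _ _
        _ ≤ M1 * |w' x| + M2 * |u x - v x| * |v' x| := by
            rw [abs_mul, abs_mul]
            gcongr
    have hDsq : (D x)^2 ≤ 2*M1^2*(w' x)^2 + 2*M2^2*(u x - v x)^2*(v' x)^2 := by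
      have h1 := pow_le_pow_left₀ (abs_nonneg (D x)) hDabs 2
      rw [sq_abs] at h1
      have h2 : (M1 * |w' x| + M2 * |u x - v x| * |v' x|)^2
          ≤ 2*(M1 * |w' x|)^2 + 2*(M2 * |u x - v x| * |v' x|)^2 := by
        nlinarith [sq_nonneg (M1 * |w' x| - M2 * |u x - v x| * |v' x|)]
      have e1 : (M1 * |w' x|)^2 = M1^2 * (w' x)^2 := by
        rw [mul_pow, sq_abs]
      have e2 : (M2 * |u x - v x| * |v' x|)^2 = M2^2 * (u x - v x)^2 * (v' x)^2 := by
        rw [mul_pow, mul_pow, sq_abs, sq_abs]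
      rw [e1, e2] at h2
      linarith [h1, h2]
    have hlast : 2*M2^2*(u x - v x)^2*(v' x)^2 ≤ 2*M2^2*((1/L+1)*S)*(v' x)^2 := by
      have key : 0 ≤ 2*M2^2*(v' x)^2 * ((1/L+1)*S - (u x - v x)^2) :=
        mul_nonneg (by positivity) (by linarith [hsob x hx])
      have expand : 2*M2^2*((1/L+1)*S)*(v' x)^2 - 2*M2^2*(u x - v x)^2*(v' x)^2
          = 2*M2^2*(v' x)^2 * ((1/L+1)*S - (u x - v x)^2) := by ring
      linarith
    linarith
  -- integrability
  have hwc : ContinuousOn (fun x => u x - v x) (Set.Icc a b) := hwCD.continuousOn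
  have i1 : IntervalIntegrable (fun x => M1^2*(u x - v x)^2) volume a b :=
    cont_intInt hab.le (continuousOn_const.mul (hwc.pow 2))
  have i2 : IntervalIntegrable (fun x => 2*M1^2*(w' x)^2) volume a b :=
    cont_intInt hab.le (continuousOn_const.mul (hw'c.pow 2))
  have i3 : IntervalIntegrable (fun x => 2*M2^2*((1/L+1)*S)*(v' x)^2) volume a b :=
    cont_intInt hab.le (continuousOn_const.mul (hv'c.pow 2))
  have iLHS : IntervalIntegrable
      (fun x => (f (u x) - f (v x))^2 + (D x)^2) volume a b :=
    cont_intInt hab.le ((hfuCD.continuousOn.pow 2).add (hDc.pow 2))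
  have hInt1 : (∫ x in a..b, ((f (u x) - f (v x))^2 + (D x)^2)) ≤
      ∫ x in a..b, (M1^2*(u x - v x)^2 + 2*M1^2*(w' x)^2 + 2*M2^2*((1/L+1)*S)*(v' x)^2) := by
    apply intervalIntegral.integral_mono_on hab.le iLHS ((i1.add i2).add i3) hNum
  have hsplit : (∫ x in a..b, (M1^2*(u x - v x)^2 + 2*M1^2*(w' x)^2
        + 2*M2^2*((1/L+1)*S)*(v' x)^2))
      = M1^2 * (∫ x in a..b, (u x - v x)^2) + 2*M1^2 * (∫ x in a..b, (w' x)^2)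
        + (2*M2^2*((1/L+1)*S)) * (∫ x in a..b, (v' x)^2) := by
    rw [intervalIntegral.integral_add (i1.add i2) i3, intervalIntegral.integral_add i1 i2,
      intervalIntegral.integral_const_mul, intervalIntegral.integral_const_mul,
      intervalIntegral.integral_const_mul]
  have hw2S : (∫ x in a..b, (u x - v x)^2) ≤ S := by
    rw [hSdef]
    apply intervalIntegral.integral_mono_on hab.le (cont_intInt hab.le (hwc.pow 2))
      (cont_intInt hab.le ((hwc.pow 2).add (hw'c.pow 2)))
      (fun t _ => le_add_of_nonneg_right (sq_nonneg _))
  have hw'2S : (∫ x in a..b, (w' x)^2) ≤ S := by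
    rw [hSdef]
    apply intervalIntegral.integral_mono_on hab.le (cont_intInt hab.le (hw'c.pow 2))
      (cont_intInt hab.le ((hwc.pow 2).add (hw'c.pow 2)))
      (fun t _ => le_add_of_nonneg_left (sq_nonneg _))
  have hv'nn : 0 ≤ ∫ x in a..b, (v' x)^2 :=
    intervalIntegral.integral_nonneg hab.le (fun t _ => sq_nonneg _)
  have hKS : (∫ x in a..b, ((f (u x) - f (v x))^2 + (D x)^2)) ≤ (K+1) * S := by
    have t1 : M1^2 * (∫ x in a..b, (u x - v x)^2) ≤ M1^2 * S :=
      mul_le_mul_of_nonneg_left hw2S (by positivity)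
    have t2 : 2*M1^2 * (∫ x in a..b, (w' x)^2) ≤ 2*M1^2 * S :=
      mul_le_mul_of_nonneg_left hw'2S (by positivity)
    have ht3c : 0 ≤ 2*M2^2*((1/L+1)*S) :=
      mul_nonneg (by positivity) (mul_nonneg (by linarith) hSnn)
    have t3 : (2*M2^2*((1/L+1)*S)) * (∫ x in a..b, (v' x)^2)
        ≤ (2*M2^2*((1/L+1)*S)) * R^2 := mul_le_mul_of_nonneg_left hvd ht3c
    have hringeq : M1^2*S + 2*M1^2*S + (2*M2^2*((1/L+1)*S))*R^2 = K * S := by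
      rw [hK]; ring
    have hKS1 : K * S ≤ (K+1) * S := by nlinarith [hSnn]
    calc (∫ x in a..b, ((f (u x) - f (v x))^2 + (D x)^2))
        ≤ ∫ x in a..b, (M1^2*(u x - v x)^2 + 2*M1^2*(w' x)^2
            + 2*M2^2*((1/L+1)*S)*(v' x)^2) := hInt1
      _ = M1^2 * (∫ x in a..b, (u x - v x)^2) + 2*M1^2 * (∫ x in a..b, (w' x)^2)
            + (2*M2^2*((1/L+1)*S)) * (∫ x in a..b, (v' x)^2) := hsplit
      _ ≤ M1^2*S + 2*M1^2*S + (2*M2^2*((1/L+1)*S))*R^2 := by linarith [t1, t2, t3]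
      _ = K * S := hringeq
      _ ≤ (K+1) * S := hKS1
  show Real.sqrt (∫ x in a..b, ((f (u x) - f (v x))^2 + (D x)^2))
      ≤ Real.sqrt (K+1) * Real.sqrt (∫ x in a..b, ((u x - v x)^2 + (w' x)^2))
  rw [← hSdef, ← Real.sqrt_mul (by linarith) S]
  exact Real.sqrt_le_sqrt hKS
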